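/- For n ≥ 4, every surjective edge-coloring of the complete graph K_n with 3 colors can avoid both a rainbow K_{1,3} and a rainbow matching of size 3; explicitly, the coloring giving edge x₁x₂ color 1, edges x₁x_j (3 ≤ j ≤ n) color 2, and all remaining edges color 3 contains no rainbow K_{1,3} and no rainbow 3K_2. -/

import Mathlib

open SimpleGraph

/-- Number of edges of a graph. -/
noncomputable def edgeCount {V : Type*} (G : SimpleGraph V) : ℕ := G.edgeSet.ncard

/-- Degree of a vertex. -/
noncomputable def deg {V : Type*} (G : SimpleGraph V) (v : V) : ℕ := (G.neighborSet v).ncard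

/-- Maximum degree. -/
noncomputable def maxDeg {V : Type*} (G : SimpleGraph V) : ℕ := sSup (Set.range (deg G))

/-- Matching number: maximum size of a matching. -/
noncomputable def matchNum {V : Type*} (G : SimpleGraph V) : ℕ :=
  sSup {n | ∃ M : G.Subgraph, M.IsMatching ∧ M.edgeSet.ncard = n}

/-- `G` contains a copy of `H` (a subgraph isomorphic to `H`). -/
def CopyIn {α β : Type*} (H : SimpleGraph α) (G : SimpleGraph β) : Prop :=
  ∃ f : H →g G, Function.Injective f

/-- The friendship graph `F_k`: `k` triangles sharing exactly one common vertex (vertex 0). -/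
def friendship (k : ℕ) : SimpleGraph (Fin (2 * k + 1)) :=
  SimpleGraph.fromRel (fun a b => a.val = 0 ∨ b.val = 0 ∨ (a.val + 1) / 2 = (b.val + 1) / 2)

/-- The star `K_{1,m}` with center 0 and `m` leaves. -/
def starGraph (m : ℕ) : SimpleGraph (Fin (m + 1)) :=
  SimpleGraph.fromRel (fun a b => a.val = 0 ∨ b.val = 0)

/-- The matching `mK_2` of `m` disjoint edges. -/
def matchGraph (m : ℕ) : SimpleGraph (Fin (2 * m)) :=
  SimpleGraph.fromRel (fun a b => a.val / 2 = b.val / 2)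

/-- Turán number: max edges of an `n`-vertex graph with no copy of `H`. -/
noncomputable def exNum (n : ℕ) {α : Type*} (H : SimpleGraph α) : ℕ :=
  sSup {m | ∃ G : SimpleGraph (Fin n), ¬ CopyIn H G ∧ edgeCount G = m}

/-- `f(ν, Δ)`: max edges of a graph with matching number ≤ ν and max degree ≤ Δ. -/
noncomputable def fMax (ν Δ : ℕ) : ℕ :=
  sSup {m | ∃ (n : ℕ) (G : SimpleGraph (Fin n)),
    matchNum G ≤ ν ∧ (∀ v, deg G v ≤ Δ) ∧ edgeCount G = m}

/-- A surjective edge-coloring of `K_n` using exactly `r` colors `0, …, r-1`. -/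
def IsSurjColoring (n r : ℕ) (c : Sym2 (Fin n) → ℕ) : Prop :=
  (∀ e : Sym2 (Fin n), ¬ e.IsDiag → c e < r) ∧
  ∀ i < r, ∃ e : Sym2 (Fin n), ¬ e.IsDiag ∧ c e = i

/-- The colored `K_n` contains a rainbow copy of `H`. -/
def RainbowCopy {α : Type*} {n : ℕ} (c : Sym2 (Fin n) → ℕ) (H : SimpleGraph α) : Prop :=
  ∃ f : H →g (⊤ : SimpleGraph (Fin n)), Function.Injective f ∧
    Set.InjOn (fun e => c (Sym2.map (⇑f) e)) H.edgeSet

/-- Anti-Ramsey number for the pair `{K_{1,k+1}, (k+1)K_2}`. -/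
noncomputable def arPair (n k : ℕ) : ℕ :=
  sInf {r | ∀ c : Sym2 (Fin n) → ℕ, IsSurjColoring n r c →
    RainbowCopy c (_root_.starGraph (k + 1)) ∨ RainbowCopy c (matchGraph (k + 1))}

/-- Anti-Ramsey number of the friendship graph `F_k`. -/
noncomputable def arFriend (n k : ℕ) : ℕ :=
  sInf {r | ∀ c : Sym2 (Fin n) → ℕ, IsSurjColoring n r c → RainbowCopy c (friendship k)}

/-- Anti-Ramsey number of a general graph `G`. -/
noncomputable def arGraph (n : ℕ) {α : Type*} (G : SimpleGraph α) : ℕ :=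
  sInf {r | ∀ c : Sym2 (Fin n) → ℕ, IsSurjColoring n r c → RainbowCopy c G}

/-- Turán number of the family `{G − e : e ∈ E(G)}`. -/
noncomputable def exFamDel (n : ℕ) {α : Type*} (G : SimpleGraph α) : ℕ :=
  sSup {m | ∃ H : SimpleGraph (Fin n),
    (∀ e ∈ G.edgeSet, ¬ CopyIn (G.deleteEdges {e}) H) ∧ edgeCount H = m}

/-- The explicit 3-coloring of `K_n` (edge `x₀x₁` gets color 1, edges `x₀x_j`, `j ≥ 2`,
get color 2, all other edges get color 3) has no rainbow `K_{1,3}` and no rainbow `3K_2`. -/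
theorem stmt6 (n : ℕ) (hn : 4 ≤ n) (c : Sym2 (Fin n) → ℕ)
    (h1 : ∀ i j : Fin n, i.val = 0 → j.val = 1 → c s(i, j) = 1)
    (h2 : ∀ i j : Fin n, i.val = 0 → 2 ≤ j.val → c s(i, j) = 2)
    (h3 : ∀ i j : Fin n, i.val ≠ 0 → j.val ≠ 0 → i ≠ j → c s(i, j) = 3) :
    ¬ RainbowCopy c (_root_.starGraph 3) ∧ ¬ RainbowCopy c (matchGraph 3) := by
  constructor
  · rintro ⟨f, hinj, hIO⟩
    have mem : ∀ i : Fin 4, i ≠ 0 → s((0:Fin 4), i) ∈ (_root_.starGraph 3).edgeSet := by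
      intro i hi
      rw [SimpleGraph.mem_edgeSet]; unfold _root_.starGraph; rw [SimpleGraph.fromRel_adj]
      exact ⟨fun h => hi h.symm, Or.inl (Or.inl rfl)⟩
    have cne : ∀ i j : Fin 4, i ≠ 0 → j ≠ 0 → i ≠ j →
        c s(f 0, f i) ≠ c s(f 0, f j) := by
      intro i j hi hj hij h
      have := hIO (mem i hi) (mem j hj) (by
        show c (Sym2.map f s(0, i)) = c (Sym2.map f s(0, j))
        rw [Sym2.map_pair_eq, Sym2.map_pair_eq]; exact h)
      rw [Sym2.eq_iff] at this
      rcases this with ⟨-, h'⟩ | ⟨h', -⟩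
      · exact hij h'
      · exact hj h'.symm
    have fne : ∀ i j : Fin 4, i ≠ j → f i ≠ f j := fun i j h he => h (hinj he)
    by_cases hv : (f 0).val = 0
    · -- all three colors in {1,2}
      have col : ∀ i : Fin 4, i ≠ 0 → c s(f 0, f i) = 1 ∨ c s(f 0, f i) = 2 := by
        intro i hi
        have hne0 : (f i).val ≠ 0 := by
          intro h
          exact fne i 0 hi (Fin.ext (h.trans hv.symm))
        rcases Nat.lt_or_ge (f i).val 2 with h | h
        · left; exact h1 (f 0) (f i) hv (by omega)
        · right; exact h2 (f 0) (f i) hv h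
      have c1 := col 1 (by decide); have c2 := col 2 (by decide); have c3 := col 3 (by decide)
      have n12 := cne 1 2 (by decide) (by decide) (by decide)
      have n13 := cne 1 3 (by decide) (by decide) (by decide)
      have n23 := cne 2 3 (by decide) (by decide) (by decide)
      rcases c1 with h|h <;> rcases c2 with h'|h' <;> rcases c3 with h''|h'' <;> omega
    · -- center nonzero: at most one leaf is vertex 0, two edges get color 3
      have col3 : ∀ i : Fin 4, i ≠ 0 → (f i).val ≠ 0 → c s(f 0, f i) = 3 := by
        intro i hi h0
        exact h3 (f 0) (f i) hv h0 (fne 0 i (Ne.symm hi))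
      have zne : ∀ i j : Fin 4, i ≠ j → (f i).val = 0 → (f j).val ≠ 0 := by
        intro i j hij hi hj
        exact fne i j hij (Fin.ext (hi.trans hj.symm))
      by_cases hA : (f 1).val = 0
      · exact cne 2 3 (by decide) (by decide) (by decide)
          ((col3 2 (by decide) (zne 1 2 (by decide) hA)).trans
           (col3 3 (by decide) (zne 1 3 (by decide) hA)).symm)
      · by_cases hB : (f 2).val = 0
        · exact cne 1 3 (by decide) (by decide) (by decide)
            ((col3 1 (by decide) hA).trans
             (col3 3 (by decide) (zne 2 3 (by decide) hB)).symm)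
        · exact cne 1 2 (by decide) (by decide) (by decide)
            ((col3 1 (by decide) hA).trans (col3 2 (by decide) hB).symm)
  · rintro ⟨f, hinj, hIO⟩
    have mem : ∀ i : Fin 6, i.val % 2 = 0 → s(i, i + 1) ∈ (matchGraph 3).edgeSet := by
      intro i hi
      rw [SimpleGraph.mem_edgeSet]; unfold matchGraph; rw [SimpleGraph.fromRel_adj]
      revert hi; revert i; decide
    have fne : ∀ i j : Fin 6, i ≠ j → f i ≠ f j := fun i j h he => h (hinj he)
    have cne : ∀ i j : Fin 6, i.val % 2 = 0 → j.val % 2 = 0 → i ≠ j →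
        c s(f i, f (i+1)) ≠ c s(f j, f (j+1)) := by
      intro i j hi hj hij h
      have := hIO (mem i hi) (mem j hj) (by
        show c (Sym2.map f s(i, i+1)) = c (Sym2.map f s(j, j+1))
        rw [Sym2.map_pair_eq, Sym2.map_pair_eq]; exact h)
      rw [Sym2.eq_iff] at this
      rcases this with ⟨h', -⟩ | ⟨h', h''⟩
      · exact hij h'
      · have key : ∀ i j : Fin 6, i.val % 2 = 0 → j.val % 2 = 0 →
            i = j + 1 → i + 1 = j → False := by decide
        exact key i j hi hj h' h''
    have zne : ∀ i j : Fin 6, i ≠ j → (f i).val = 0 → (f j).val ≠ 0 := by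
      intro i j hij hi hj
      exact fne i j hij (Fin.ext (hi.trans hj.symm))
    have col3 : ∀ i : Fin 6, i.val % 2 = 0 → (f i).val ≠ 0 → (f (i+1)).val ≠ 0 →
        c s(f i, f (i+1)) = 3 := by
      intro i hi h0 h1'
      have key : ∀ i : Fin 6, i.val % 2 = 0 → i ≠ i + 1 := by decide
      exact h3 (f i) (f (i+1)) h0 h1' (fne i (i+1) (key i hi))
    -- at most one of the six images has val 0, so two of the edges {0,1},{2,3},{4,5}
    -- have all endpoints nonzero
    by_cases hA : (f 0).val = 0 ∨ (f 1).val = 0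
    · have e2 := col3 2 (by decide)
        (by rcases hA with h|h
            · exact zne 0 2 (by decide) h
            · exact zne 1 2 (by decide) h)
        (by rcases hA with h|h
            · exact zne 0 3 (by decide) h
            · exact zne 1 3 (by decide) h)
      have e4 := col3 4 (by decide)
        (by rcases hA with h|h
            · exact zne 0 4 (by decide) h
            · exact zne 1 4 (by decide) h)
        (by rcases hA with h|h
            · exact zne 0 5 (by decide) h
            · exact zne 1 5 (by decide) h)
      exact cne 2 4 (by decide) (by decide) (by decide) (e2.trans e4.symm)
    · push_neg at hA
      by_cases hB : (f 2).val = 0 ∨ (f 3).val = 0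
      · have e0 := col3 0 (by decide) hA.1 hA.2
        have e4 := col3 4 (by decide)
          (by rcases hB with h|h
              · exact zne 2 4 (by decide) h
              · exact zne 3 4 (by decide) h)
          (by rcases hB with h|h
              · exact zne 2 5 (by decide) h
              · exact zne 3 5 (by decide) h)
        exact cne 0 4 (by decide) (by decide) (by decide) (e0.trans e4.symm)
      · push_neg at hB
        have e0 := col3 0 (by decide) hA.1 hA.2
        have e2 := col3 2 (by decide) hB.1 hB.2
        exact cne 0 2 (by decide) (by decide) (by decide) (e0.trans e2.symm)
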